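/- arXiv:1402.0958 — 2 statements merged into one kernel-verified Lean document; each statement's English description precedes it below -/
import Mathlib

section
/- (Knight's identity, rescaled) For all u, v ∈ ℝ with u ≠ 0, ρ_τ(u − v) − ρ_τ(u) = −v ψ_τ(u) + 2∫₀^v (1{u ≤ s} − 1{u ≤ 0}) ds. -/
open intervalIntegral MeasureTheory

lemma knight_mono (u : ℝ) : Monotone (fun s : ℝ => if u ≤ s then (1:ℝ) else 0) := by
  intro a b hab
  by_cases h : u ≤ a
  · simp [h, h.trans hab]
  · by_cases h' : u ≤ b <;> simp [h, h']

lemma knight_intble (u a b : ℝ) :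
    IntervalIntegrable (fun s : ℝ => if u ≤ s then (1:ℝ) else 0) volume a b :=
  (knight_mono u).intervalIntegrable

lemma knight_eval_one (u a b : ℝ) (h : u ≤ min a b) :
    ∫ s in a..b, (if u ≤ s then (1:ℝ) else 0) = b - a := by
  rw [intervalIntegral.integral_congr (g := fun _ => (1:ℝ)), intervalIntegral.integral_const,
    smul_eq_mul, mul_one]
  intro s hs
  have : min a b ≤ s := (Set.uIcc_subset_uIcc_iff_le.mp le_rfl).1.trans hs.1
  simp [le_trans h this]

lemma knight_eval_zero (u a b : ℝ) (h : max a b ≤ u) :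
    ∫ s in a..b, (if u ≤ s then (1:ℝ) else 0) = 0 := by
  rw [intervalIntegral.integral_congr_ae (g := fun _ => (0:ℝ)), intervalIntegral.integral_const,
    smul_eq_mul, mul_zero]
  have hne : ∀ᵐ s : ℝ, s ≠ u := by
    rw [MeasureTheory.ae_iff]
    simpa using Real.volume_singleton (a := u)
  filter_upwards [hne] with s hs hmem
  have hle : s ≤ max a b := le_max_iff.mpr (by simpa using hmem.2)
  have : s < u := lt_of_le_of_ne (hle.trans h) hs
  simp [not_le.mpr this]

theorem knight_identity (τ : ℝ) (hτ : τ ∈ Set.Ioo (0:ℝ) 1) (u v : ℝ) (hu : u ≠ 0) :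
    (|u - v| + (2 * τ - 1) * (u - v)) - (|u| + (2 * τ - 1) * u) =
      -v * (2 * τ * (if u > 0 then (1:ℝ) else 0) + 2 * (τ - 1) * (if u < 0 then (1:ℝ) else 0))
      + 2 * ∫ s in (0:ℝ)..v, ((if u ≤ s then (1:ℝ) else 0) - (if u ≤ 0 then (1:ℝ) else 0)) := by
  rcases lt_or_gt_of_ne hu with hneg | hpos
  · -- u < 0
    have h1 : ¬ u > 0 := by linarith
    have h2 : u ≤ 0 := hneg.le
    simp only [h1, hneg, if_true, if_false, if_pos h2]
    have hsub : ∫ s in (0:ℝ)..v, ((if u ≤ s then (1:ℝ) else 0) - 1)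
        = (∫ s in (0:ℝ)..v, (if u ≤ s then (1:ℝ) else 0)) - (v - 0) := by
      rw [intervalIntegral.integral_sub (knight_intble u 0 v) intervalIntegrable_const,
        intervalIntegral.integral_const]
      simp
    rcases le_or_gt u v with hv | hv
    · -- integral of indicator = v
      have : ∫ s in (0:ℝ)..v, (if u ≤ s then (1:ℝ) else 0) = v - 0 :=
        knight_eval_one u 0 v (le_min h2 hv)
      rw [hsub, this]
      rw [abs_of_nonpos (by linarith), abs_of_neg hneg]
      ring
    · -- v < u < 0
      have hsplit : (∫ s in (v:ℝ)..u, (if u ≤ s then (1:ℝ) else 0))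
          + (∫ s in (u:ℝ)..0, (if u ≤ s then (1:ℝ) else 0))
          = ∫ s in (v:ℝ)..0, (if u ≤ s then (1:ℝ) else 0) :=
        intervalIntegral.integral_add_adjacent_intervals (knight_intble u v u) (knight_intble u u 0)
      have e1 : ∫ s in (v:ℝ)..u, (if u ≤ s then (1:ℝ) else 0) = 0 :=
        knight_eval_zero u v u (by simp [hv.le])
      have e2 : ∫ s in (u:ℝ)..0, (if u ≤ s then (1:ℝ) else 0) = 0 - u :=
        knight_eval_one u u 0 (by simp [h2])
      have e3 : ∫ s in (0:ℝ)..v, (if u ≤ s then (1:ℝ) else 0) = u := by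
        rw [intervalIntegral.integral_symm, ← hsplit, e1, e2]; ring
      rw [hsub, e3]
      rw [abs_of_nonneg (by linarith), abs_of_neg hneg]
      ring
  · -- u > 0
    have h1 : ¬ u < 0 := by linarith
    have h2 : ¬ u ≤ 0 := by linarith
    simp only [hpos, h1, h2, if_true, if_false, sub_zero]
    rcases le_or_gt v u with hv | hv
    · have e0 : ∫ s in (0:ℝ)..v, (if u ≤ s then (1:ℝ) else 0) = 0 :=
        knight_eval_zero u 0 v (by simp [hpos.le, hv])
      rw [e0]
      rw [abs_of_nonneg (by linarith), abs_of_pos hpos]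
      ring
    · have hsplit : (∫ s in (0:ℝ)..u, (if u ≤ s then (1:ℝ) else 0))
          + (∫ s in (u:ℝ)..v, (if u ≤ s then (1:ℝ) else 0))
          = ∫ s in (0:ℝ)..v, (if u ≤ s then (1:ℝ) else 0) :=
        intervalIntegral.integral_add_adjacent_intervals (knight_intble u 0 u) (knight_intble u u v)
      have e1 : ∫ s in (0:ℝ)..u, (if u ≤ s then (1:ℝ) else 0) = 0 :=
        knight_eval_zero u 0 u (by simp [hpos.le])
      have e2 : ∫ s in (u:ℝ)..v, (if u ≤ s then (1:ℝ) else 0) = v - u :=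
        knight_eval_one u u v (by simp [hv.le])
      rw [← hsplit, e1, e2]
      rw [abs_of_neg (by linarith), abs_of_pos hpos]
      ring
end

section
/- If the real random variable ε has a probability density function bounded by a constant C > 0, then for every z ∈ ℝ, E[(ψ_τ(ε + z) − ψ_τ(ε))²] ≤ 8C|z|. -/
open MeasureTheory

theorem psi_tau_squared_increment_bound {Ω : Type*} [MeasureSpace Ω]
    [IsProbabilityMeasure (volume : Measure Ω)]
    (τ : ℝ) (hτ : τ ∈ Set.Ioo (0:ℝ) 1) (ε : Ω → ℝ) (hmeas : Measurable ε)
    (f : ℝ → ℝ) (hf : Measurable f) (hf0 : ∀ y, 0 ≤ f y)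
    (C : ℝ) (hC : 0 < C) (hfC : ∀ y, f y ≤ C)
    (hdens : Measure.map ε volume
      = (volume : Measure ℝ).withDensity (fun y => ENNReal.ofReal (f y)))
    (z : ℝ) :
    (∫ ω : Ω, ((2 * τ * (if ε ω + z > 0 then (1:ℝ) else 0)
          + 2 * (τ - 1) * (if ε ω + z < 0 then (1:ℝ) else 0))
        - (2 * τ * (if ε ω > 0 then (1:ℝ) else 0)
          + 2 * (τ - 1) * (if ε ω < 0 then (1:ℝ) else 0)))^2)
      ≤ 8 * C * |z| := by
  obtain ⟨hτ0, hτ1⟩ := hτ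
  set ψ : ℝ → ℝ := fun y => 2 * τ * (if y > 0 then (1:ℝ) else 0)
      + 2 * (τ - 1) * (if y < 0 then (1:ℝ) else 0) with hψ
  set S : Set ℝ := Set.uIcc (-z) 0 with hS
  have hSmeas : MeasurableSet S := measurableSet_uIcc
  have hψmeas : Measurable ψ := by
    apply Measurable.add <;> apply Measurable.const_mul
    · exact Measurable.ite (measurableSet_lt measurable_const measurable_id)
        measurable_const measurable_const
    · exact Measurable.ite (measurableSet_lt measurable_id measurable_const)
        measurable_const measurable_const
  have hbound : ∀ y : ℝ, (ψ (y + z) - ψ y)^2 ≤ S.indicator (fun _ => (4:ℝ)) y := by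
    intro y
    by_cases hy : y ∈ S
    · rw [Set.indicator_of_mem hy]
      have h1 : ∀ a : ℝ, 2*τ - 2 ≤ ψ a ∧ ψ a ≤ 2*τ := by
        intro a
        simp only [hψ]
        rcases lt_trichotomy a 0 with h|h|h
        · rw [if_neg (by linarith), if_pos h]; constructor <;> nlinarith
        · rw [if_neg (by simp [h]), if_neg (by simp [h])]; constructor <;> nlinarith
        · rw [if_pos h, if_neg (by linarith)]; constructor <;> nlinarith
      obtain ⟨ha1, ha2⟩ := h1 (y + z)
      obtain ⟨hb1, hb2⟩ := h1 y
      nlinarith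
    · rw [Set.indicator_of_notMem hy]
      have heq : ψ (y + z) = ψ y := by
        rcases le_total 0 y with h0 | h0
        · have hy0 : 0 < y := by
            rcases h0.lt_or_eq with h|h
            · exact h
            · exact absurd (by rw [hS, ← h]; exact Set.right_mem_uIcc) hy
          have hyz : 0 < y + z := by
            by_contra h
            push_neg at h
            exact hy (Set.mem_uIcc.mpr (Or.inr ⟨h0, by linarith⟩))
          simp only [hψ]
          rw [if_pos hyz, if_pos hy0, if_neg (not_lt.mpr hyz.le), if_neg (not_lt.mpr hy0.le)]
        · have hy0 : y < 0 := by
            rcases h0.lt_or_eq with h|h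
            · exact h
            · exact absurd (by rw [hS, h]; exact Set.right_mem_uIcc) hy
          have hyz : y + z < 0 := by
            by_contra h
            push_neg at h
            exact hy (Set.mem_uIcc.mpr (Or.inl ⟨by linarith, h0⟩))
          simp only [hψ]
          rw [if_neg (not_lt.mpr hyz.le), if_neg (not_lt.mpr hy0.le), if_pos hyz, if_pos hy0]
      rw [heq]
      simp
  have hg4 : ∀ ω, (ψ (ε ω + z) - ψ (ε ω))^2 ≤ 4 := by
    intro ω
    refine (hbound (ε ω)).trans ?_
    by_cases h : ε ω ∈ S <;> simp [h]
  have hmeasg : Measurable fun ω => (ψ (ε ω + z) - ψ (ε ω))^2 :=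
    ((hψmeas.comp (hmeas.add_const z)).sub (hψmeas.comp hmeas)).pow_const 2
  have hint1 : Integrable (fun ω => (ψ (ε ω + z) - ψ (ε ω))^2) volume := by
    refine Integrable.mono' (integrable_const (4:ℝ)) hmeasg.aestronglyMeasurable
      (ae_of_all _ fun ω => ?_)
    rw [Real.norm_eq_abs, abs_of_nonneg (sq_nonneg _)]
    exact hg4 ω
  have hI : (fun ω => S.indicator (fun _ => (4:ℝ)) (ε ω))
      = (ε ⁻¹' S).indicator (fun _ => (4:ℝ)) := by
    ext ω
    by_cases h : ε ω ∈ S <;> simp [h]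
  have hint2 : Integrable (fun ω => S.indicator (fun _ => (4:ℝ)) (ε ω)) volume := by
    rw [hI]
    exact (integrable_const (4:ℝ)).indicator (hmeas hSmeas)
  have hmeasure : volume (ε ⁻¹' S) ≤ ENNReal.ofReal (C * |z|) := by
    have h1 : volume (ε ⁻¹' S) = Measure.map ε volume S :=
      (Measure.map_apply hmeas hSmeas).symm
    rw [h1, hdens, withDensity_apply _ hSmeas]
    calc ∫⁻ y in S, ENNReal.ofReal (f y) ∂volume
        ≤ ∫⁻ y in S, ENNReal.ofReal C ∂volume :=
          lintegral_mono fun y => ENNReal.ofReal_le_ofReal (hfC y)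
      _ = ENNReal.ofReal C * volume S := by
          rw [lintegral_const, Measure.restrict_apply MeasurableSet.univ, Set.univ_inter]
      _ = ENNReal.ofReal C * ENNReal.ofReal |z| := by
          rw [hS, Real.volume_interval]
          norm_num
      _ = ENNReal.ofReal (C * |z|) := (ENNReal.ofReal_mul hC.le).symm
  show (∫ ω, (ψ (ε ω + z) - ψ (ε ω))^2) ≤ 8 * C * |z|
  calc (∫ ω, (ψ (ε ω + z) - ψ (ε ω))^2)
      ≤ ∫ ω, S.indicator (fun _ => (4:ℝ)) (ε ω) :=
        integral_mono hint1 hint2 (fun ω => hbound (ε ω))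
    _ = (volume (ε ⁻¹' S)).toReal * 4 := by
        rw [hI, integral_indicator_const _ (hmeas hSmeas), smul_eq_mul]
        rfl
    _ ≤ (C * |z|) * 4 := by
        have := ENNReal.toReal_le_of_le_ofReal (by positivity) hmeasure
        nlinarith
    _ ≤ 8 * C * |z| := by nlinarith [abs_nonneg z, hC.le]
end
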